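/- Let G be a simple graph with at least one vertex. If α(G) ≤ κ(G) + 1, then G has a Hamilton path (a path containing every vertex of G). -/

import Mathlib

open SimpleGraph

namespace CEaux

variable {V : Type*} [DecidableEq V]

/-- In a list with no duplicates, a decomposition around an element is unique. -/
lemma unique_append_cons {w : V} : ∀ {l1 l2 r1 r2 : List V},
    l1 ++ w :: r1 = l2 ++ w :: r2 → (l1 ++ w :: r1).Nodup → l1 = l2 ∧ r1 = r2 := by
  intro l1
  induction l1 with
  | nil =>
    intro l2 r1 r2 h hn
    cases l2 with
    | nil => simpa using h
    | cons x l2' =>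
      exfalso
      simp only [List.nil_append, List.cons_append] at h hn
      obtain ⟨hx, hr⟩ := List.cons_eq_cons.mp h
      subst hx
      rw [List.nodup_cons] at hn
      have : w ∈ r1 := by rw [hr]; simp
      exact hn.1 (by simpa using this) |>.elim
  | cons x l1' ih =>
    intro l2 r1 r2 h hn
    cases l2 with
    | nil =>
      exfalso
      simp only [List.cons_append, List.nil_append] at h hn
      obtain ⟨hx, hr⟩ := List.cons_eq_cons.mp h
      subst hx
      rw [List.nodup_cons] at hn
      have : x ∈ l1' ++ x :: r1 := by simp
      exact hn.1 (by simpa using this)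
    | cons y l2' =>
      simp only [List.cons_append] at h hn
      obtain ⟨hx, hr⟩ := List.cons_eq_cons.mp h
      rw [List.nodup_cons] at hn
      obtain ⟨h1, h2⟩ := ih hr hn.2
      exact ⟨by rw [hx, h1], h2⟩

/-- Nodup of a list obtained by replacing the head of the middle part. -/
lemma nodup_splice {l1 l2 mid : List V} {w : V}
    (h : (l1 ++ w :: l2).Nodup) (hmid : mid.Nodup)
    (hm : ∀ x ∈ mid, x = w ∨ (x ∉ l1 ∧ x ∉ l2)) :
    (l1 ++ (mid ++ l2)).Nodup := by
  rw [List.nodup_append] at h ⊢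
  obtain ⟨h1, h2, h12⟩ := h
  rw [List.nodup_cons] at h2
  refine ⟨h1, ?_, ?_⟩
  · rw [List.nodup_append]
    refine ⟨hmid, h2.2, ?_⟩
    intro x hx y hx2 hxy
    subst hxy
    rcases hm x hx with rfl | ⟨_, hb⟩
    · exact h2.1 hx2
    · exact hb hx2
  · intro x hx y hx2 hxy
    subst hxy
    rcases List.mem_append.mp hx2 with hx2 | hx2
    · rcases hm x hx2 with rfl | ⟨ha, _⟩
      · exact h12 _ hx _ (by simp) rfl
      · exact ha hx
    · exact h12 _ hx _ (by simp [hx2]) rfl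

variable (G : SimpleGraph V)

/-- The graph `G` restricted to edges inside `T`. -/
def sideG (T : Set V) : SimpleGraph V where
  Adj x y := G.Adj x y ∧ x ∈ T ∧ y ∈ T
  symm := ⟨fun x y ⟨h, hx, hy⟩ => ⟨h.symm, hy, hx⟩⟩
  loopless := ⟨fun x ⟨h, _, _⟩ => G.irrefl h⟩

variable {G}

lemma sideG_le {T : Set V} : sideG G T ≤ G := fun _ _ h => h.1

lemma sideG_support_mem {T : Set V} : ∀ {x y : V} (p : (sideG G T).Walk x y),
    x ∈ T → ∀ z ∈ p.support, z ∈ T := by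
  intro x y p
  induction p with
  | nil => intro hx z hz; simp at hz; rwa [hz]
  | cons h p ih =>
    intro hx z hz
    rw [SimpleGraph.Walk.support_cons] at hz
    rcases List.mem_cons.mp hz with rfl | hz
    · exact hx
    · exact ih h.2.2 z hz

lemma sideG_reach_mem {T : Set V} {v y : V} (h : (sideG G T).Reachable v y) (hv : v ∈ T) :
    y ∈ T := by
  obtain ⟨p⟩ := h
  exact sideG_support_mem p hv y (SimpleGraph.Walk.end_mem_support p)

/-- Detour lemma: between two vertices outside `T`, each with a neighbour reachable
from `v` inside `T`, there is a path of length ≥ 2 whose interior lies in `T`. -/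
lemma detour {T : Set V} {v u u' h h' : V} (hne : u ≠ u') (hu : u ∉ T) (hu' : u' ∉ T)
    (hvT : v ∈ T)
    (hh : (sideG G T).Reachable v h) (hh' : (sideG G T).Reachable v h')
    (e : G.Adj u h) (e' : G.Adj u' h') :
    ∃ W : G.Walk u u', W.IsPath ∧ 2 ≤ W.length ∧ ∀ x ∈ W.support, x = u ∨ x = u' ∨ x ∈ T := by
  have hr : (sideG G T).Reachable h h' := hh.symm.trans hh'
  obtain ⟨p0⟩ := hr
  set p : (sideG G T).Walk h h' := p0.bypass with hp
  have hpath : p.IsPath := SimpleGraph.Walk.bypass_isPath p0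
  have hsub : ∀ e ∈ p.edges, e ∈ G.edgeSet := fun e he =>
    SimpleGraph.edgeSet_mono sideG_le (p.edges_subset_edgeSet he)
  set q : G.Walk h h' := p.transfer G hsub with hq
  have hqsupp : q.support = p.support := SimpleGraph.Walk.support_transfer p hsub
  have hqpath : q.IsPath := hpath.transfer hsub
  have hT : ∀ z ∈ q.support, z ∈ T := by
    rw [hqsupp]
    exact sideG_support_mem p (sideG_reach_mem hh hvT)
  refine ⟨SimpleGraph.Walk.cons e (q.concat e'.symm), ?_, ?_, ?_⟩
  · rw [SimpleGraph.Walk.isPath_def, SimpleGraph.Walk.support_cons,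
      SimpleGraph.Walk.support_concat, List.nodup_cons,
      List.mem_append, List.nodup_append]
    refine ⟨?_, hqpath.support_nodup, by simp, ?_⟩
    · rintro (hmem | hmem)
      · exact hu (hT u hmem)
      · simp at hmem; exact hne hmem
    · intro x hx y hx2 hxy
      simp at hx2
      subst hx2 hxy
      exact hu' (hT _ hx)
  · rw [SimpleGraph.Walk.length_cons, SimpleGraph.Walk.length_concat]
    omega
  · intro x hx
    rw [SimpleGraph.Walk.support_cons, SimpleGraph.Walk.support_concat] at hx
    rcases List.mem_cons.mp hx with rfl | hx
    · exact Or.inl rfl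
    rcases List.mem_append.mp hx with hx | hx
    · exact Or.inr (Or.inr (hT x hx))
    · simp at hx; exact Or.inr (Or.inl hx)

/-- Every walk ends with its last vertex. -/
lemma support_last {u : V} : ∀ {x : V} (q : G.Walk x u), ∃ s, q.support = s ++ [u] := by
  intro x q
  induction q with
  | nil => exact ⟨[], rfl⟩
  | cons h p ih =>
    obtain ⟨s, hs⟩ := ih
    exact ⟨_ :: s, by rw [SimpleGraph.Walk.support_cons, hs]; rfl⟩


open SimpleGraph.Walk

section Core

variable {G : SimpleGraph V}

/-- The core argument: a longest path in a graph with `α ≤ k+1` and the deletion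
property for `k` must be Hamiltonian. -/
lemma core [Fintype V] {a b v : V} (P : G.Walk a b) (hP : P.IsPath)
    (hmax : ∀ (x y : V) (Q : G.Walk x y), Q.IsPath → Q.length ≤ P.length)
    (hv : v ∉ P.support) (k : ℕ)
    (hconn : ∀ s : Finset V, s.card < k → (G.induce {x : V | x ∉ s}).Connected)
    (hα : ∀ s : Finset V, (s : Set V).Pairwise (fun u w => ¬ G.Adj u w) → s.card ≤ k + 1) :
    False := by
  classical
  set T : Set V := {x | x ∉ P.support} with hT
  set R : V → Prop := fun y => (sideG G T).Reachable v y with hRdef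
  have hvT : v ∈ T := hv
  have hRT : ∀ y, R y → y ∉ P.support := fun y hy => sideG_reach_mem hy hvT
  have hnodupP : P.support.Nodup := hP.support_nodup
  set Att : V → Prop := fun u => u ∈ P.support ∧ ∃ h, R h ∧ G.Adj u h with hAttdef
  -- endpoints are not attached
  have h2 : ¬ Att b := by
    rintro ⟨hb, h, hRh, hadj⟩
    have hhP : h ∉ P.support := hRT h hRh
    have hN : (P.concat hadj).IsPath := by
      rw [Walk.isPath_def, Walk.support_concat, List.nodup_append]
      refine ⟨hnodupP, by simp, ?_⟩
      intro x hx y hx2 hxy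
      simp only [List.mem_singleton] at hx2
      subst hx2 hxy
      exact hhP hx
    have := hmax _ _ _ hN
    rw [Walk.length_concat] at this
    omega
  have h3 : ¬ Att a := by
    rintro ⟨ha, h, hRh, hadj⟩
    have hhP : h ∉ P.support := hRT h hRh
    have hN : (Walk.cons hadj.symm P).IsPath := (Walk.cons_isPath_iff _ _).mpr ⟨hP, hhP⟩
    have := hmax _ _ _ hN
    rw [Walk.length_cons] at this
    omega
  have hAttnb : ∀ u, Att u → u ≠ b := fun u hu he => h2 (he ▸ hu)
  -- the successor relation along `P`
  set PS : V → V → Prop := fun u w =>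
    ∃ (q : G.Walk a u) (r : G.Walk w b) (e : G.Adj u w), P = q.append (Walk.cons e r)
    with hPSdef
  have hPSsupp : ∀ u w, PS u w → ∃ s rt, P.support = s ++ u :: w :: rt := by
    rintro u w ⟨q, r, e, hdec⟩
    obtain ⟨s, hs⟩ := support_last q
    refine ⟨s, r.support.tail, ?_⟩
    rw [hdec, Walk.support_append, Walk.support_cons, List.tail_cons, hs,
      Walk.support_eq_cons r]
    simp
  have hPSex : ∀ u (hu : u ∈ P.support), u ≠ b → ∃ w, PS u w := by
    intro u hu hub
    have hd : ¬ (P.dropUntil u hu).Nil := Walk.not_nil_of_ne hub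
    refine ⟨(P.dropUntil u hu).getVert 1, P.takeUntil u hu, (P.dropUntil u hu).tail,
      (P.dropUntil u hu).adj_snd hd, ?_⟩
    rw [Walk.cons_tail_eq _ hd]
    exact (P.take_spec hu).symm
  have hPSfun : ∀ u w1 w2, PS u w1 → PS u w2 → w1 = w2 := by
    intro u w1 w2 h1 h2'
    obtain ⟨s1, r1, hs1⟩ := hPSsupp u w1 h1
    obtain ⟨s2, r2, hs2⟩ := hPSsupp u w2 h2'
    have heq : s1 ++ u :: (w1 :: r1) = s2 ++ u :: (w2 :: r2) := by
      rw [← hs1, ← hs2]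
    have hnd : (s1 ++ u :: (w1 :: r1)).Nodup := by rw [← hs1]; exact hnodupP
    have := (unique_append_cons heq hnd).2
    exact (List.cons_eq_cons.mp this).1
  have hPSinj : ∀ u1 u2 w, PS u1 w → PS u2 w → u1 = u2 := by
    intro u1 u2 w h1 h2'
    obtain ⟨s1, r1, hs1⟩ := hPSsupp u1 w h1
    obtain ⟨s2, r2, hs2⟩ := hPSsupp u2 w h2'
    have e1 : s1 ++ u1 :: w :: r1 = (s1 ++ [u1]) ++ w :: r1 := by simp
    have e2 : s2 ++ u2 :: w :: r2 = (s2 ++ [u2]) ++ w :: r2 := by simp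
    have heq : (s1 ++ [u1]) ++ w :: r1 = (s2 ++ [u2]) ++ w :: r2 := by
      rw [← e1, ← e2, ← hs1, ← hs2]
    have hnd : ((s1 ++ [u1]) ++ w :: r1).Nodup := by
      rw [← e1, ← hs1]; exact hnodupP
    have := (unique_append_cons heq hnd).1
    simpa using congrArg List.getLast? this
  -- basic consequences of PS
  have hPSmem : ∀ u w, PS u w → w ∈ P.support ∧ u ∈ P.support ∧ u ≠ w ∧ w ≠ a := by
    intro u w hps
    obtain ⟨s, rt, hs⟩ := hPSsupp u w hps
    have hwmem : w ∈ P.support := by rw [hs]; simp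
    have humem : u ∈ P.support := by rw [hs]; simp
    have hnd : (s ++ u :: w :: rt).Nodup := hs ▸ hnodupP
    have huw : u ≠ w := by
      have := (List.nodup_append.mp hnd).2.1
      rw [List.nodup_cons] at this
      intro he; exact this.1 (he ▸ List.mem_cons_self)
    have hwa : w ≠ a := by
      intro he
      subst he
      have hcons := P.support_eq_cons
      cases s with
      | nil =>
        rw [List.nil_append] at hs
        rw [hcons] at hs
        exact huw (List.cons_eq_cons.mp hs).1.symm
      | cons x s' =>
        rw [List.cons_append] at hs
        rw [hcons] at hs
        obtain ⟨hx, ht⟩ := List.cons_eq_cons.mp hs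
        have hnd' := hnodupP
        rw [hcons, ht, List.nodup_cons] at hnd'
        exact hnd'.1 (by subst hx; simp)
    exact ⟨hwmem, humem, huw, hwa⟩
  -- C3 : the successor of an attached vertex has no reachable neighbour
  have h9 : ∀ u w, Att u → PS u w → ∀ h', R h' → ¬ G.Adj w h' := by
    rintro u w ⟨huP, h, hRh, hadj⟩ hps h' hRh' hadj'
    obtain ⟨q, r, e, hdec⟩ := hps
    have hsupp : P.support = q.support ++ r.support := by
      rw [hdec, Walk.support_append, Walk.support_cons, List.tail_cons]
    have hnd : (q.support ++ r.support).Nodup := hsupp ▸ hnodupP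
    have hwP : w ∈ P.support := by rw [hsupp]; simp
    obtain ⟨W, hWp, hWlen, hWmem⟩ := detour (G := G) (v := v) (G.ne_of_adj e)
      (show u ∉ T from fun hc => hc huP) (show w ∉ T from fun hc => hc hwP)
      hvT hRh hRh' hadj hadj'
    set N := q.append (W.append r) with hNdef
    have hNsupp : N.support = q.support ++ (W.support.tail ++ r.support.tail) := by
      rw [hNdef, Walk.support_append, Walk.support_append, Walk.support_eq_cons W]
      simp
    have hWtail : ∀ x ∈ W.support.tail, x = w ∨ (x ∉ q.support ∧ x ∉ r.support.tail) := by
      intro x hx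
      have hx' : x ∈ W.support := List.mem_of_mem_tail hx
      have hxu : x ≠ u := by
        intro he
        have := hWp.support_nodup
        rw [Walk.support_eq_cons W, List.nodup_cons] at this
        exact this.1 (he ▸ hx)
      rcases hWmem x hx' with he | he | hxT
      · exact absurd he hxu
      · exact Or.inl he
      · refine Or.inr ⟨fun hc => hxT ?_, fun hc => hxT ?_⟩
        · rw [hsupp]; exact List.mem_append.mpr (Or.inl hc)
        · rw [hsupp]; exact List.mem_append.mpr (Or.inr (List.mem_of_mem_tail hc))
    have hNpath : N.IsPath := by
      rw [Walk.isPath_def, hNsupp]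
      apply nodup_splice (w := w)
      · rw [← Walk.support_eq_cons r]; exact hnd
      · exact (List.tail_sublist W.support).nodup hWp.support_nodup
      · exact hWtail
    have hle := hmax _ _ N hNpath
    have hl1 : N.length = q.length + (W.length + r.length) := by
      rw [hNdef, Walk.length_append, Walk.length_append]
    have hl2 : P.length = q.length + (r.length + 1) := by
      rw [hdec, Walk.length_append, Walk.length_cons]
    omega
  -- C5 : the start of the path is not adjacent to any successor
  have h10 : ∀ u w, Att u → PS u w → ¬ G.Adj a w := by
    rintro u w ⟨huP, h, hRh, hadj⟩ hps haw
    obtain ⟨q, r, e, hdec⟩ := hps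
    have hsupp : P.support = q.support ++ r.support := by
      rw [hdec, Walk.support_append, Walk.support_cons, List.tail_cons]
    have hnd : (q.support ++ r.support).Nodup := hsupp ▸ hnodupP
    set R0 := q.reverse.append (Walk.cons haw r) with hR0def
    have hR0supp : R0.support = q.support.reverse ++ r.support := by
      rw [hR0def, Walk.support_append, Walk.support_cons, List.tail_cons,
        Walk.support_reverse]
    have hR0path : R0.IsPath := by
      rw [Walk.isPath_def, hR0supp, List.nodup_append]
      rw [List.nodup_append] at hnd
      exact ⟨(List.nodup_reverse.mpr hnd.1), hnd.2.1, fun x hx => hnd.2.2 x (List.mem_reverse.mp hx)⟩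
    have hhmem : h ∉ R0.support := by
      rw [hR0supp]
      intro hx
      apply hRT h hRh
      rw [hsupp]
      rcases List.mem_append.mp hx with hx | hx
      · exact List.mem_append.mpr (Or.inl (List.mem_reverse.mp hx))
      · exact List.mem_append.mpr (Or.inr hx)
    have hNpath : (Walk.cons hadj.symm R0).IsPath :=
      (Walk.cons_isPath_iff _ _).mpr ⟨hR0path, hhmem⟩
    have hle := hmax _ _ _ hNpath
    have hl1 : R0.length = q.length + (r.length + 1) := by
      rw [hR0def, Walk.length_append, Walk.length_cons, Walk.length_reverse]
    have hl2 : P.length = q.length + (r.length + 1) := by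
      rw [hdec, Walk.length_append, Walk.length_cons]
    rw [Walk.length_cons] at hle
    omega
  -- C4 auxiliary: crossing construction, asymmetric version
  have h11aux : ∀ (u1 u2 w2 : V) (q1 : G.Walk a u1) {w1 : V} (r1 : G.Walk w1 b)
      (e1 : G.Adj u1 w1), P = q1.append (Walk.cons e1 r1) → Att u1 → Att u2 → u1 ≠ u2 →
      (hu2r : u2 ∈ r1.support) → PS u2 w2 → ¬ G.Adj w1 w2 := by
    rintro u1 u2 w2 q1 w1 r1 e1 hdec ⟨hu1P, h, hRh, hadj1⟩ ⟨hu2P, h', hRh', hadj2⟩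
      hne12 hu2r hPS2 hadjw
    have hu2b : u2 ≠ b := hAttnb u2 ⟨hu2P, h', hRh', hadj2⟩
    set m := r1.takeUntil u2 hu2r with hmdef
    set ff := r1.dropUntil u2 hu2r with hffdef
    have hffnil : ¬ ff.Nil := Walk.not_nil_of_ne hu2b
    have hr1 : r1 = m.append ff := (r1.take_spec hu2r).symm
    set g := ff.tail with hgdef
    have hff : ff = Walk.cons (ff.adj_snd hffnil) g := (Walk.cons_tail_eq ff hffnil).symm
    have hdec2 : P = (q1.append (Walk.cons e1 m)).append
        (Walk.cons (ff.adj_snd hffnil) g) := by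
      rw [hdec, hr1, ← Walk.cons_append, Walk.append_assoc]
      exact congrArg (fun z => (q1.append (Walk.cons e1 m)).append z) hff
    have hw2 : w2 = ff.getVert 1 :=
      hPSfun u2 w2 _ hPS2 ⟨_, g, ff.adj_snd hffnil, hdec2⟩
    subst hw2
    -- support bookkeeping
    have hffsupp : ff.support = u2 :: g.support := (Walk.cons_support_tail hffnil).symm
    have hPsupp2 : P.support = q1.support ++ (m.support ++ g.support) := by
      rw [hdec, Walk.support_append, Walk.support_cons, List.tail_cons, hr1,
        Walk.support_append, hffsupp, List.tail_cons]
    obtain ⟨sm, hsm⟩ := support_last m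
    have hndP2 : (q1.support ++ ((sm ++ [u2]) ++ g.support)).Nodup := by
      rw [← hsm, ← hPsupp2]; exact hnodupP
    -- detour from u1 to u2
    obtain ⟨W, hWp, hWlen, hWmem⟩ := detour (G := G) (v := v) hne12
      (show u1 ∉ T from fun hc => hc hu1P) (show u2 ∉ T from fun hc => hc hu2P)
      hvT hRh hRh' hadj1 hadj2
    set N := q1.append (W.append (m.reverse.append (Walk.cons hadjw g))) with hNdef
    have hNsupp : N.support = q1.support ++ (W.support.tail ++ (sm.reverse ++ g.support)) := by
      rw [hNdef, Walk.support_append, Walk.support_append, Walk.support_append,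
        Walk.support_cons, List.tail_cons, Walk.support_reverse, hsm,
        Walk.support_eq_cons W]
      simp
    have hperm : ((sm ++ [u2]) ++ g.support).Perm (u2 :: (sm.reverse ++ g.support)) := by
      have h1 : (sm ++ [u2]) ++ g.support = sm ++ (u2 :: g.support) := by simp
      rw [h1]
      exact List.perm_middle.trans ((sm.reverse_perm.symm.append_right g.support).cons u2)
    have hndbase : (q1.support ++ (u2 :: (sm.reverse ++ g.support))).Nodup :=
      ((hperm.append_left q1.support).nodup_iff).mp hndP2
    have hWtail : ∀ x ∈ W.support.tail,
        x = u2 ∨ (x ∉ q1.support ∧ x ∉ sm.reverse ++ g.support) := by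
      intro x hx
      have hx' : x ∈ W.support := List.mem_of_mem_tail hx
      have hxu : x ≠ u1 := by
        intro he
        have := hWp.support_nodup
        rw [Walk.support_eq_cons W, List.nodup_cons] at this
        exact this.1 (he ▸ hx)
      rcases hWmem x hx' with he | he | hxT
      · exact absurd he hxu
      · exact Or.inl he
      · have hxP : x ∉ P.support := hxT
        rw [hPsupp2, hsm] at hxP
        refine Or.inr ⟨fun hc => hxP ?_, fun hc => ?_⟩
        · simp [hc]
        · rcases List.mem_append.mp hc with hc | hc
          · exact hxP (by simp [List.mem_reverse.mp hc])
          · exact hxP (by simp [hc])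
    have hNpath : N.IsPath := by
      rw [Walk.isPath_def, hNsupp]
      exact nodup_splice hndbase
        ((List.tail_sublist W.support).nodup hWp.support_nodup) hWtail
    have hle := hmax _ _ N hNpath
    have hl1 : N.length = q1.length + (W.length + (m.length + (g.length + 1))) := by
      rw [hNdef, Walk.length_append, Walk.length_append, Walk.length_append,
        Walk.length_cons, Walk.length_reverse]
    have hl2 : P.length = q1.length + (m.length + ff.length + 1) := by
      rw [hdec, Walk.length_append, Walk.length_cons, hr1, Walk.length_append]
    have hl3 : g.length + 1 = ff.length := Walk.length_tail_add_one hffnil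
    omega
  -- ordering : two attached vertices cannot each lie strictly before the other
  have horder : ∀ (u1 u2 : V) (q1 : G.Walk a u1) {w1 : V} (r1 : G.Walk w1 b)
      (q2 : G.Walk a u2) {w2 : V} (r2 : G.Walk w2 b),
      P.support = q1.support ++ r1.support → P.support = q2.support ++ r2.support →
      u1 ≠ u2 → u2 ∈ q1.support → u1 ∈ q2.support → False := by
    intro u1 u2 q1 w1 r1 q2 w2 r2 hs1 hs2 hne hu2 hu1
    obtain ⟨s1, hq1⟩ := support_last q1
    obtain ⟨s2, hq2⟩ := support_last q2
    have hu2s1 : u2 ∈ s1 := by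
      rw [hq1] at hu2
      rcases List.mem_append.mp hu2 with h | h
      · exact h
      · simp at h; exact absurd h.symm hne
    have hu1s2 : u1 ∈ s2 := by
      rw [hq2] at hu1
      rcases List.mem_append.mp hu1 with h | h
      · exact h
      · simp at h; exact absurd h hne
    obtain ⟨c1, c2, hc⟩ := List.append_of_mem hu2s1
    obtain ⟨d1, d2, hd⟩ := List.append_of_mem hu1s2
    have hform1 : P.support = c1 ++ u2 :: (c2 ++ [u1] ++ r1.support) := by
      rw [hs1, hq1, hc]; simp
    have hform2 : P.support = (d1 ++ u1 :: d2) ++ u2 :: r2.support := by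
      rw [hs2, hq2, hd]; simp
    have heq : c1 ++ u2 :: (c2 ++ [u1] ++ r1.support) = (d1 ++ u1 :: d2) ++ u2 :: r2.support :=
      hform1.symm.trans hform2
    have hnd : (c1 ++ u2 :: (c2 ++ [u1] ++ r1.support)).Nodup := hform1 ▸ hnodupP
    obtain ⟨hl, hr⟩ := unique_append_cons heq hnd
    rw [List.nodup_append] at hnd
    have hmem1 : u1 ∈ c1 := by rw [hl]; simp
    have hmem2 : u1 ∈ u2 :: (c2 ++ [u1] ++ r1.support) := by simp
    exact hnd.2.2 _ hmem1 _ hmem2 rfl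
  -- C4 : successors of distinct attached vertices are not adjacent
  have h11 : ∀ u1 w1 u2 w2, Att u1 → Att u2 → u1 ≠ u2 → PS u1 w1 → PS u2 w2 →
      ¬ G.Adj w1 w2 := by
    intro u1 w1 u2 w2 hA1 hA2 hne hPS1 hPS2 hadjw
    obtain ⟨q1, r1, e1, hdec1⟩ := hPS1
    obtain ⟨q2, r2, e2, hdec2⟩ := hPS2
    have hs1 : P.support = q1.support ++ r1.support := by
      rw [hdec1, Walk.support_append, Walk.support_cons, List.tail_cons]
    have hs2 : P.support = q2.support ++ r2.support := by
      rw [hdec2, Walk.support_append, Walk.support_cons, List.tail_cons]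
    obtain ⟨hu2P, -⟩ := id hA2
    obtain ⟨hu1P, -⟩ := id hA1
    rcases List.mem_append.mp (hs1 ▸ hu2P) with hu2q | hu2r
    · rcases List.mem_append.mp (hs2 ▸ hu1P) with hu1q | hu1r
      · exact horder u1 u2 q1 r1 q2 r2 hs1 hs2 hne hu2q hu1q
      · exact h11aux u2 u1 w1 q2 r2 e2 hdec2 hA2 hA1 hne.symm hu1r
          ⟨q1, r1, e1, hdec1⟩ hadjw.symm
    · exact h11aux u1 u2 w2 q1 r1 e1 hdec1 hA1 hA2 hne hu2r
        ⟨q2, r2, e2, hdec2⟩ hadjw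
  -- the attachment set
  set A : Finset V := Finset.univ.filter Att with hAdef
  have hAmem : ∀ u, u ∈ A ↔ Att u := by
    intro u; rw [hAdef, Finset.mem_filter]; simp
  -- the successor function
  set f : V → V := fun u => if h : ∃ w, PS u w then h.choose else u with hfdef
  have hfPS : ∀ u, Att u → PS u (f u) := by
    intro u hu
    have hx : ∃ w, PS u w := hPSex u hu.1 (hAttnb u hu)
    have : f u = hx.choose := dif_pos hx
    rw [this]
    exact hx.choose_spec
  -- the attachment set has at least k elements
  have hRv : R v := Reachable.refl v
  have hcardA : k ≤ A.card := by
    by_contra hlt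
    push_neg at hlt
    have hconn' := hconn A hlt
    have hvA : v ∈ {x : V | x ∉ A} := by
      intro hc
      exact hv ((hAmem v).mp hc).1
    have haA : a ∈ {x : V | x ∉ A} := by
      intro hc
      exact h3 ((hAmem a).mp hc)
    have key : ∀ (x y : {x : V | x ∉ A}) (Wc : (G.induce {x : V | x ∉ A}).Walk x y),
        R x.1 → R y.1 := by
      intro x y Wc
      induction Wc with
      | nil => exact id
      | @cons x' z' y' hadj p ih =>
        intro hx
        apply ih
        have hGadj : G.Adj x'.1 z'.1 := hadj
        have hz : z'.1 ∉ P.support := by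
          intro hzP
          exact z'.2 ((hAmem z'.1).mpr ⟨hzP, x'.1, hx, hGadj.symm⟩)
        have hxT : x'.1 ∈ T := hRT x'.1 hx
        exact hx.trans (SimpleGraph.Adj.reachable ⟨hGadj, hxT, hz⟩)
    obtain ⟨Wc⟩ := hconn'.preconnected ⟨v, hvA⟩ ⟨a, haA⟩
    exact hRT a (key _ _ Wc hRv) P.start_mem_support
  -- the independent set
  set S : Finset V := insert v (insert a (A.image f)) with hSdef
  have hSpair : (S : Set V).Pairwise fun x y => ¬ G.Adj x y := by
    have nva : ¬ G.Adj v a := fun hc => h3 ⟨P.start_mem_support, v, hRv, hc.symm⟩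
    have nvf : ∀ u, Att u → ¬ G.Adj v (f u) :=
      fun u hu hc => h9 u (f u) hu (hfPS u hu) v hRv hc.symm
    have naf : ∀ u, Att u → ¬ G.Adj a (f u) :=
      fun u hu hc => h10 u (f u) hu (hfPS u hu) hc
    intro x hx y hy hxy
    simp only [hSdef, Finset.coe_insert, Set.mem_insert_iff, Finset.coe_image,
      Set.mem_image, Finset.mem_coe] at hx hy
    rcases hx with rfl | rfl | ⟨u1, hu1, rfl⟩ <;>
      rcases hy with rfl | rfl | ⟨u2, hu2, rfl⟩
    · exact absurd rfl hxy
    · exact nva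
    · exact nvf u2 ((hAmem u2).mp hu2)
    · exact fun hc => nva hc.symm
    · exact absurd rfl hxy
    · exact naf u2 ((hAmem u2).mp hu2)
    · exact fun hc => nvf u1 ((hAmem u1).mp hu1) hc.symm
    · exact fun hc => naf u1 ((hAmem u1).mp hu1) hc.symm
    · have hA1 := (hAmem u1).mp hu1
      have hA2 := (hAmem u2).mp hu2
      have hne : u1 ≠ u2 := fun he => hxy (by rw [he])
      exact h11 u1 (f u1) u2 (f u2) hA1 hA2 hne (hfPS u1 hA1) (hfPS u2 hA2)
  -- cardinality of the independent set
  have hinj : Set.InjOn f A := by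
    intro u1 hu1 u2 hu2 he
    have hA1 := (hAmem u1).mp hu1
    have hA2 := (hAmem u2).mp hu2
    exact hPSinj u1 u2 (f u1) (hfPS u1 hA1) (he ▸ hfPS u2 hA2)
  have hfmem : ∀ u, Att u → f u ∈ P.support ∧ f u ≠ a := by
    intro u hu
    obtain ⟨h1, _, _, h4⟩ := hPSmem u (f u) (hfPS u hu)
    exact ⟨h1, h4⟩
  have haim : a ∉ A.image f := by
    intro hc
    obtain ⟨u, hu, he⟩ := Finset.mem_image.mp hc
    exact (hfmem u ((hAmem u).mp hu)).2 he
  have hvim : v ∉ insert a (A.image f) := by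
    intro hc
    rcases Finset.mem_insert.mp hc with rfl | hc
    · exact hv P.start_mem_support
    · obtain ⟨u, hu, he⟩ := Finset.mem_image.mp hc
      exact hv (he ▸ (hfmem u ((hAmem u).mp hu)).1)
  have hcardS : S.card = A.card + 2 := by
    rw [hSdef, Finset.card_insert_of_notMem hvim, Finset.card_insert_of_notMem haim,
      Finset.card_image_of_injOn hinj]
  have := hα S hSpair
  omega


end Core

end CEaux

/-- The independence number of a graph `G`: the largest cardinality of a set of
pairwise nonadjacent vertices. -/
noncomputable def SimpleGraph.indepNumber {V : Type*} [Fintype V] (G : SimpleGraph V) : ℕ :=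
  sSup {n | ∃ s : Finset V, (s : Set V).Pairwise (fun u v => ¬ G.Adj u v) ∧ s.card = n}

/-- `G` is `k`-connected: it has more than `k` vertices and remains connected after
deletion of any set of fewer than `k` vertices. -/
def SimpleGraph.IsKConnected {V : Type*} [Fintype V] (G : SimpleGraph V) (k : ℕ) : Prop :=
  k < Fintype.card V ∧ ∀ s : Finset V, s.card < k → (G.induce {v : V | v ∉ s}).Connected

/-- The vertex connectivity of `G`: the largest `k` such that `G` is `k`-connected. -/
noncomputable def SimpleGraph.vertexConnectivity {V : Type*} [Fintype V]
    (G : SimpleGraph V) : ℕ :=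
  sSup {k | G.IsKConnected k}

/-- If `G` has at least one vertex and `α(G) ≤ κ(G) + 1`, then `G` has a Hamilton path. -/
theorem chvatal_erdos_hamilton_path {V : Type*} [Fintype V] [DecidableEq V] (G : SimpleGraph V)
    (hV : 1 ≤ Fintype.card V)
    (h : G.indepNumber ≤ G.vertexConnectivity + 1) :
    ∃ (u v : V) (p : G.Walk u v), p.IsHamiltonian := by
  classical
  have hne : Nonempty V := Fintype.card_pos_iff.mp hV
  obtain ⟨x0⟩ := hne
  -- the vertex connectivity is attained
  have hκmem : G.IsKConnected G.vertexConnectivity := by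
    have : G.vertexConnectivity ∈ {k | G.IsKConnected k} := by
      apply Nat.sSup_mem
      · exact ⟨0, hV, fun s hs => absurd hs (by omega)⟩
      · exact ⟨Fintype.card V, fun k hk => le_of_lt hk.1⟩
    exact this
  -- every independent set has size at most κ + 1
  have hα : ∀ s : Finset V, (s : Set V).Pairwise (fun u w => ¬ G.Adj u w) →
      s.card ≤ G.vertexConnectivity + 1 := by
    intro s hs
    have hbdd : BddAbove {n | ∃ s : Finset V,
        (s : Set V).Pairwise (fun u v => ¬ G.Adj u v) ∧ s.card = n} := by
      refine ⟨Fintype.card V, ?_⟩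
      rintro n ⟨t, -, rfl⟩
      simpa using Finset.card_le_univ t
    have h1 : s.card ≤ G.indepNumber := le_csSup hbdd ⟨s, hs, rfl⟩
    omega
  -- a longest path
  set L : Set ℕ := {n | ∃ (x y : V) (Q : G.Walk x y), Q.IsPath ∧ Q.length = n} with hLdef
  have hLne : L.Nonempty := ⟨0, x0, x0, Walk.nil, Walk.IsPath.nil, rfl⟩
  have hLbdd : BddAbove L := by
    refine ⟨Fintype.card V, ?_⟩
    rintro n ⟨x, y, Q, hQ, rfl⟩
    exact hQ.length_lt.le
  obtain ⟨x, y, Q, hQ, hQl⟩ := Nat.sSup_mem hLne hLbdd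
  have hmax : ∀ (x' y' : V) (Q' : G.Walk x' y'), Q'.IsPath → Q'.length ≤ Q.length := by
    intro x' y' Q' hQ'
    rw [hQl]
    exact le_csSup hLbdd ⟨x', y', Q', hQ', rfl⟩
  by_cases hall : ∀ w, w ∈ Q.support
  · exact ⟨x, y, Q, hQ.isHamiltonian_iff.mpr hall⟩
  · push_neg at hall
    obtain ⟨v, hv⟩ := hall
    exact (CEaux.core Q hQ hmax hv G.vertexConnectivity hκmem.2 hα).elim
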